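/- The second group cohomology H²(ℤ², Z_1(ℤ²)) of the group ℤ² with coefficients in the ℤ²-module Z_1(ℤ²) (with the translation action) is isomorphic to ℤ as an abelian group. -/

import Mathlib

/-- The lattice `ℤ²`. -/
abbrev Z2 : Type := Fin 2 → ℤ

/-- Edge chains of the grid complex `E²` (Cayley graph of `ℤ²`). -/
abbrev C1Z2 : Type := (Z2 × Fin 2) →₀ ℤ

/-- Vertex chains: the free abelian group on `ℤ²`. -/
abbrev C0Z2 : Type := Z2 →₀ ℤ

/-- Translation action of `v ∈ ℤ²` on edge chains: `v • δ_{(m,i)} = δ_{(m+v,i)}`. -/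
noncomputable def shiftZ (v : Z2) : C1Z2 →+ C1Z2 :=
  Finsupp.mapDomain.addMonoidHom fun p => (v + p.1, p.2)

/-- The boundary map `∂ δ_{(m,i)} = δ_{m + e i} - δ_m`. -/
noncomputable def bdZ : C1Z2 →+ C0Z2 :=
  Finsupp.liftAddHom fun p =>
    zmultiplesHom C0Z2
      (Finsupp.single (p.1 + Pi.single p.2 1) 1 - Finsupp.single p.1 1)

lemma bdZ_shiftZ (v : Z2) (γ : C1Z2) :
    bdZ (shiftZ v γ) =
      Finsupp.mapDomain.addMonoidHom (fun m : Z2 => v + m) (bdZ γ) := by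
  have h : bdZ.comp (shiftZ v) =
      (Finsupp.mapDomain.addMonoidHom (fun m : Z2 => v + m)).comp bdZ := by
    apply Finsupp.addHom_ext
    intro p n
    simp only [AddMonoidHom.comp_apply, shiftZ, bdZ,
      Finsupp.mapDomain.addMonoidHom_apply, Finsupp.mapDomain_single,
      Finsupp.liftAddHom_apply_single, zmultiplesHom_apply, map_zsmul, map_sub,
      Finsupp.mapDomain_single]
    rw [add_assoc]
  exact DFunLike.congr_fun h γ

/-- The cycle group `Z_1(ℤ²) = H_1(E²)`, as a `ℤ²`-module (an abelian group with
translation action). -/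
noncomputable abbrev Z1 : AddSubgroup C1Z2 := bdZ.ker

/-- The translation action of `v ∈ ℤ²` on the cycle group `Z_1(ℤ²)`. -/
noncomputable def shiftM (v : Z2) : Z1 →+ Z1 where
  toFun γ := ⟨shiftZ v γ.1, by
    have h0 : bdZ γ.1 = 0 := γ.2
    simp [AddMonoidHom.mem_ker, bdZ_shiftZ, h0]⟩
  map_zero' := by ext; simp
  map_add' a b := by ext; simp

/-- The linear map whose kernel is the group of 2-cocycles of `ℤ²` with values in
`Z_1(ℤ²)`: `y` is a cocycle iff `u·y(v,w) − y(u+v,w) + y(u,v+w) − y(u,v) = 0`. -/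
noncomputable def Tmap : ((Z2 × Z2) → Z1) →+ ((Z2 × Z2 × Z2) → Z1) where
  toFun y t := shiftM t.1 (y (t.2.1, t.2.2)) - y (t.1 + t.2.1, t.2.2)
    + y (t.1, t.2.1 + t.2.2) - y (t.1, t.2.1)
  map_zero' := by funext t; simp
  map_add' y z := by
    funext t
    simp only [Pi.add_apply, map_add]
    abel

/-- The coboundary map sending `α : ℤ² → Z_1(ℤ²)` to the 2-coboundary
`(u,v) ↦ u·α(v) − α(u+v) + α(u)`; its range is the group of 2-coboundaries. -/
noncomputable def Smap : (Z2 → Z1) →+ ((Z2 × Z2) → Z1) where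
  toFun α t := shiftM t.1 (α t.2) - α (t.1 + t.2) + α t.1
  map_zero' := by funext t; simp
  map_add' α β := by
    funext t
    simp only [Pi.add_apply, map_add]
    abel
section Prelim

/-- canonical vector notation -/
noncomputable def V (a b : ℤ) : Z2 := ![a, b]

@[simp] lemma V_apply0 (a b : ℤ) : V a b 0 = a := rfl
@[simp] lemma V_apply1 (a b : ℤ) : V a b 1 = b := rfl

lemma Z2_ext {u v : Z2} (h0 : u 0 = v 0) (h1 : u 1 = v 1) : u = v := by
  funext i
  fin_cases i <;> assumption

@[simp] lemma V_add (a b c d : ℤ) : V a b + V c d = V (a+c) (b+d) := by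
  apply Z2_ext <;> simp

lemma V_eta (u : Z2) : V (u 0) (u 1) = u := by
  apply Z2_ext <;> simp

@[simp] lemma V_zero : V 0 0 = (0 : Z2) := by
  apply Z2_ext <;> simp

lemma E1_eq : (Pi.single (0 : Fin 2) (1:ℤ) : Z2) = V 1 0 := by
  apply Z2_ext <;> simp [V]

lemma E2_eq : (Pi.single (1 : Fin 2) (1:ℤ) : Z2) = V 0 1 := by
  apply Z2_ext <;> simp [V]

/-- shift on vertex chains -/
noncomputable def shC (v : Z2) : C0Z2 →+ C0Z2 :=
  Finsupp.mapDomain.addMonoidHom fun m => v + m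

@[simp] lemma shC_single (v m : Z2) (n : ℤ) :
    shC v (Finsupp.single m n) = Finsupp.single (v + m) n := by
  simp [shC, Finsupp.mapDomain.addMonoidHom_apply, Finsupp.mapDomain_single]

lemma shC_shC (u v : Z2) (c : C0Z2) : shC u (shC v c) = shC (u + v) c := by
  have : (shC u).comp (shC v) = shC (u + v) := by
    apply Finsupp.addHom_ext
    intro m n
    simp [add_assoc]
  exact DFunLike.congr_fun this c

@[simp] lemma shC_zero_apply (c : C0Z2) : shC 0 c = c := by
  have : shC (0 : Z2) = AddMonoidHom.id _ := by
    apply Finsupp.addHom_ext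
    intro m n
    simp
  rw [this]; rfl

@[simp] lemma shiftZ_single (v m : Z2) (i : Fin 2) (n : ℤ) :
    shiftZ v (Finsupp.single (m, i) n) = Finsupp.single (v + m, i) n := by
  simp [shiftZ, Finsupp.mapDomain.addMonoidHom_apply, Finsupp.mapDomain_single]

lemma shiftZ_shiftZ (u v : Z2) (γ : C1Z2) : shiftZ u (shiftZ v γ) = shiftZ (u + v) γ := by
  have : (shiftZ u).comp (shiftZ v) = shiftZ (u + v) := by
    apply Finsupp.addHom_ext
    intro p n
    obtain ⟨m, i⟩ := p
    simp [add_assoc]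
  exact DFunLike.congr_fun this γ

@[simp] lemma shiftZ_zero_apply (γ : C1Z2) : shiftZ 0 γ = γ := by
  have : shiftZ (0 : Z2) = AddMonoidHom.id _ := by
    apply Finsupp.addHom_ext
    intro p n
    obtain ⟨m, i⟩ := p
    simp
  rw [this]; rfl

lemma bdZ_shC (v : Z2) (γ : C1Z2) : bdZ (shiftZ v γ) = shC v (bdZ γ) := bdZ_shiftZ v γ

@[simp] lemma bdZ_single (m : Z2) (i : Fin 2) (n : ℤ) :
    bdZ (Finsupp.single (m, i) n) =
      n • (Finsupp.single (m + Pi.single i 1) 1 - Finsupp.single m 1) := by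
  simp [bdZ, Finsupp.liftAddHom_apply_single]

@[simp] lemma shiftM_coe (v : Z2) (x : Z1) : (shiftM v x : C1Z2) = shiftZ v x.1 := rfl

lemma shiftM_shiftM (u v : Z2) (x : Z1) : shiftM u (shiftM v x) = shiftM (u + v) x := by
  apply Subtype.ext
  simp [shiftZ_shiftZ]

@[simp] lemma shiftM_zero_apply (x : Z1) : shiftM 0 x = x := by
  apply Subtype.ext
  simp

end Prelim
section Functionals

/-- winding functional: sum over vertical edges of coefficient times x-coordinate -/
noncomputable def phi0 : C1Z2 →+ ℤ :=
  Finsupp.liftAddHom fun p => zmultiplesHom ℤ (if p.2 = 1 then p.1 0 else 0)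

@[simp] lemma phi0_single (m : Z2) (i : Fin 2) (n : ℤ) :
    phi0 (Finsupp.single (m, i) n) = n * (if i = 1 then m 0 else 0) := by
  simp [phi0, Finsupp.liftAddHom_apply_single, zmultiplesHom_apply, smul_eq_mul]

/-- total number (with multiplicity) of vertical edges -/
noncomputable def vert : C1Z2 →+ ℤ :=
  Finsupp.liftAddHom fun p => zmultiplesHom ℤ (if p.2 = 1 then 1 else 0)

@[simp] lemma vert_single (m : Z2) (i : Fin 2) (n : ℤ) :
    vert (Finsupp.single (m, i) n) = n * (if i = 1 then 1 else 0) := by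
  simp [vert, Finsupp.liftAddHom_apply_single, zmultiplesHom_apply, smul_eq_mul]

/-- second-coordinate functional on vertex chains -/
noncomputable def psi : C0Z2 →+ ℤ :=
  Finsupp.liftAddHom fun m => zmultiplesHom ℤ (m 1)

@[simp] lemma psi_single (m : Z2) (n : ℤ) :
    psi (Finsupp.single m n) = n * m 1 := by
  simp [psi, Finsupp.liftAddHom_apply_single, zmultiplesHom_apply, smul_eq_mul]

lemma psi_bdZ (γ : C1Z2) : psi (bdZ γ) = vert γ := by
  have h : psi.comp bdZ = vert := by
    apply Finsupp.addHom_ext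
    rintro ⟨m, i⟩ n
    fin_cases i <;>
      simp [map_zsmul, smul_eq_mul, Pi.single_apply, mul_sub] <;> ring
  exact DFunLike.congr_fun h γ

lemma vert_cycle {γ : C1Z2} (h : bdZ γ = 0) : vert γ = 0 := by
  rw [← psi_bdZ, h, map_zero]

lemma phi0_shiftZ (v : Z2) (γ : C1Z2) :
    phi0 (shiftZ v γ) = phi0 γ + v 0 * vert γ := by
  induction γ using Finsupp.induction_linear with
  | zero => simp
  | add f g hf hg => simp only [map_add, hf, hg]; ring
  | single p n =>
    obtain ⟨m, i⟩ := p
    fin_cases i <;> simp <;> ring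

lemma phi0_shiftZ_cycle (v : Z2) {γ : C1Z2} (h : bdZ γ = 0) :
    phi0 (shiftZ v γ) = phi0 γ := by
  rw [phi0_shiftZ, vert_cycle h, mul_zero, add_zero]

/-- extract the `i`-component of an edge chain -/
noncomputable def extC (i : Fin 2) : C1Z2 →+ C0Z2 :=
  Finsupp.liftAddHom fun p =>
    if p.2 = i then (Finsupp.singleAddHom p.1 : ℤ →+ C0Z2) else 0

@[simp] lemma extC_single (i : Fin 2) (m : Z2) (j : Fin 2) (n : ℤ) :
    extC i (Finsupp.single (m, j) n) = if j = i then Finsupp.single m n else 0 := by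
  by_cases h : j = i <;> simp [extC, Finsupp.liftAddHom_apply_single, h]

lemma extC_shiftZ (i : Fin 2) (v : Z2) (γ : C1Z2) :
    extC i (shiftZ v γ) = shC v (extC i γ) := by
  induction γ using Finsupp.induction_linear with
  | zero => simp
  | add f g hf hg => simp only [map_add, hf, hg]
  | single p n =>
    obtain ⟨m, j⟩ := p
    by_cases h : j = i <;> simp [h]

lemma bd_decomp (γ : C1Z2) :
    bdZ γ = (shC (V 1 0) (extC 0 γ) - extC 0 γ) + (shC (V 0 1) (extC 1 γ) - extC 1 γ) := by
  induction γ using Finsupp.induction_linear with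
  | zero => simp
  | add f g hf hg => simp only [map_add, hf, hg]; abel
  | single p n =>
    obtain ⟨m, i⟩ := p
    fin_cases i <;>
      simp [E1_eq, E2_eq, smul_sub, Finsupp.smul_single, add_comm m] <;> abel

/-- projection of a vertex chain to the second coordinate -/
noncomputable def piY : C0Z2 →+ (ℤ →₀ ℤ) :=
  Finsupp.mapDomain.addMonoidHom fun m : Z2 => m 1

lemma piY_shC (v : Z2) (c : C0Z2) :
    piY (shC v c) = Finsupp.mapDomain (fun n => v 1 + n) (piY c) := by
  simp only [piY, shC, Finsupp.mapDomain.addMonoidHom_apply]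
  rw [← Finsupp.mapDomain_comp, ← Finsupp.mapDomain_comp]
  congr 1

lemma oneD_inv (s : ℤ →₀ ℤ) (h : Finsupp.mapDomain (fun n => 1 + n) s = s) : s = 0 := by
  by_contra hne
  have hsupp : s.support = s.support.image (fun n => 1 + n) := by
    conv_lhs => rw [← h]
    exact Finsupp.mapDomain_support_of_injective (fun a b => by omega) s
  have hne' : s.support.Nonempty := Finsupp.support_nonempty_iff.2 hne
  set k := s.support.max' hne' with hk
  have hmem : k ∈ s.support := s.support.max'_mem hne'
  have : 1 + k ∈ s.support := by
    rw [hsupp]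
    exact Finset.mem_image_of_mem _ hmem
  have := s.support.le_max' _ this
  omega

lemma twoD_inv (c : C0Z2) (h : shC (V 1 0) c = c) : c = 0 := by
  by_contra hne
  have hinj : Function.Injective (fun m : Z2 => V 1 0 + m) :=
    fun a b hab => by simpa using hab
  have hsupp : c.support = c.support.image (fun m => V 1 0 + m) := by
    conv_lhs => rw [← h]
    exact Finsupp.mapDomain_support_of_injective hinj c
  have hne' : c.support.Nonempty := Finsupp.support_nonempty_iff.2 hne
  have hne'' : (c.support.image (fun m => m 0)).Nonempty := hne'.image _
  set k := (c.support.image (fun m => m 0)).max' hne'' with hk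
  have hmem : k ∈ c.support.image (fun m => m 0) := Finset.max'_mem _ hne''
  obtain ⟨p, hp, hpk⟩ := Finset.mem_image.1 hmem
  have hpk' : p 0 = k := hpk
  have hp' : V 1 0 + p ∈ c.support := by
    rw [hsupp]; exact Finset.mem_image_of_mem _ hp
  have : (V 1 0 + p) 0 ∈ c.support.image (fun m => m 0) :=
    Finset.mem_image_of_mem _ hp'
  have h2 := (c.support.image (fun m => m 0)).le_max' _ this
  have h3 : (V 1 0 + p) 0 = 1 + p 0 := by simp [V]
  have h4 : (1:ℤ) + p 0 ≤ k := by rw [← h3]; exact h2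
  rw [hpk'] at h4
  exact absurd h4 (not_le.mpr (lt_one_add k))

/-- the row sums of the vertical part of a cycle vanish -/
lemma rowsum_zero {γ : C1Z2} (h : bdZ γ = 0) : piY (extC 1 γ) = 0 := by
  have h0 : piY (bdZ γ) = 0 := by rw [h, map_zero]
  rw [bd_decomp] at h0
  simp only [map_add, map_sub, piY_shC] at h0
  have e1 : (V 1 0 : Z2) 1 = 0 := rfl
  have e2 : (V 0 1 : Z2) 1 = 1 := rfl
  rw [e1, e2] at h0
  have hid : Finsupp.mapDomain (fun n : ℤ => 0 + n) (piY (extC 0 γ)) = piY (extC 0 γ) := by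
    have : (fun n : ℤ => 0 + n) = id := by funext n; simp
    rw [this, Finsupp.mapDomain_id]
  rw [hid] at h0
  exact oneD_inv _ (by linear_combination (norm := abel) h0)

end Functionals
section Star

/-- the fundamental square cycle -/
noncomputable def z0 : C1Z2 :=
  Finsupp.single (V 0 0, 0) 1 - Finsupp.single (V 0 1, 0) 1
    + Finsupp.single (V 1 0, 1) 1 - Finsupp.single (V 0 0, 1) 1

lemma bdZ_z0 : bdZ z0 = 0 := by
  simp only [z0, map_add, map_sub, bdZ_single, E1_eq, E2_eq, one_smul]
  have h1 : V 0 0 + V 1 0 = V 1 0 := by simp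
  have h2 : V 0 1 + V 1 0 = V 1 1 := by simp
  have h3 : V 1 0 + V 0 1 = V 1 1 := by simp
  have h4 : V 0 0 + V 0 1 = V 0 1 := by simp
  rw [h1, h2, h3, h4]
  abel

lemma extC1_z0 : extC 1 z0 = Finsupp.single (V 1 0) 1 - Finsupp.single (V 0 0) 1 := by
  simp only [z0, map_add, map_sub, extC_single]
  norm_num

lemma phi0_z0 : phi0 z0 = 1 := by
  simp only [z0, map_add, map_sub, phi0_single]
  norm_num

/-- sum of coefficients -/
noncomputable def epsC : C0Z2 →+ ℤ :=
  Finsupp.liftAddHom fun _ => AddMonoidHom.id ℤ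

@[simp] lemma epsC_single (m : Z2) (n : ℤ) : epsC (Finsupp.single m n) = n := by
  simp [epsC, Finsupp.liftAddHom_apply_single]

/-- `P ⋆ γ`, as an additive hom in `P` -/
noncomputable def starH (γ : C1Z2) : C0Z2 →+ C1Z2 :=
  Finsupp.liftAddHom fun m => zmultiplesHom C1Z2 (shiftZ m γ)

@[simp] lemma starH_single (γ : C1Z2) (m : Z2) (n : ℤ) :
    starH γ (Finsupp.single m n) = n • shiftZ m γ := by
  simp [starH, Finsupp.liftAddHom_apply_single]

lemma starH_shC (γ : C1Z2) (v : Z2) (P : C0Z2) :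
    starH γ (shC v P) = shiftZ v (starH γ P) := by
  induction P using Finsupp.induction_linear with
  | zero => simp
  | add f g hf hg => simp only [map_add, hf, hg]
  | single m n => simp [← shiftZ_shiftZ]

lemma bdZ_starH {γ : C1Z2} (h : bdZ γ = 0) (P : C0Z2) : bdZ (starH γ P) = 0 := by
  induction P using Finsupp.induction_linear with
  | zero => simp
  | add f g hf hg => simp [map_add, hf, hg]
  | single m n => simp [bdZ_shC, h]

lemma phi0_starH {γ : C1Z2} (h : bdZ γ = 0) (P : C0Z2) :
    phi0 (starH γ P) = epsC P * phi0 γ := by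
  induction P using Finsupp.induction_linear with
  | zero => simp
  | add f g hf hg => simp only [map_add, hf, hg]; ring
  | single m n => simp [phi0_shiftZ_cycle _ h, mul_comm]

lemma extC_apply (i : Fin 2) (γ : C1Z2) (m : Z2) : (extC i γ) m = γ (m, i) := by
  induction γ using Finsupp.induction_linear with
  | zero => simp
  | add f g hf hg => simp [Finsupp.add_apply, hf, hg]
  | single p n =>
    obtain ⟨m', j⟩ := p
    by_cases h : j = i
    · subst h
      by_cases hm : m' = m <;>
        simp [extC_single, Finsupp.single_apply, Prod.ext_iff, hm]
    · simp only [extC_single, if_neg h, Finsupp.coe_zero, Pi.zero_apply,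
        Finsupp.single_apply]
      rw [if_neg (by rintro ⟨⟩; exact h rfl)]

lemma eq_zero_of_ext (γ : C1Z2) (h0 : extC 0 γ = 0) (h1 : extC 1 γ = 0) : γ = 0 := by
  ext p
  obtain ⟨m, i⟩ := p
  have e0 : γ (m, 0) = 0 := by rw [← extC_apply 0, h0]; rfl
  have e1 : γ (m, 1) = 0 := by rw [← extC_apply 1, h1]; rfl
  fin_cases i <;> simpa using ‹_›

end Star
section Telescope

lemma teleX (b : ℤ) (n : ℕ) :
    ∑ i ∈ Finset.range n,
        (Finsupp.single (V (i+1) b) (1:ℤ) - Finsupp.single (V i b) 1)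
      = Finsupp.single (V n b) 1 - Finsupp.single (V 0 b) 1 := by
  induction n with
  | zero => simp
  | succ n ih =>
    rw [Finset.sum_range_succ, ih]
    push_cast
    abel

lemma teleX' (b : ℤ) (n : ℕ) :
    ∑ i ∈ Finset.range n,
        (Finsupp.single (V (-(i:ℤ)) b) (1:ℤ) - Finsupp.single (V (-1-i) b) 1)
      = Finsupp.single (V 0 b) 1 - Finsupp.single (V (-(n:ℤ)) b) 1 := by
  induction n with
  | zero => simp
  | succ n ih =>
    rw [Finset.sum_range_succ, ih]
    have : (-1 - (n:ℤ)) = -((n:ℕ)+1:ℕ) := by push_cast; ring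
    rw [this]
    abel

noncomputable def HxF (a b : ℤ) : C0Z2 :=
  if 0 ≤ a then ∑ i ∈ Finset.range a.toNat, Finsupp.single (V i b) 1
  else -∑ i ∈ Finset.range (-a).toNat, Finsupp.single (V (-1-i) b) 1

noncomputable def HyF (b : ℤ) : C0Z2 :=
  if 0 ≤ b then ∑ i ∈ Finset.range b.toNat, Finsupp.single (V 0 i) 1
  else -∑ i ∈ Finset.range (-b).toNat, Finsupp.single (V 0 (-1-i)) 1

lemma DX_HxF (a b : ℤ) :
    shC (V 1 0) (HxF a b) - HxF a b
      = Finsupp.single (V a b) 1 - Finsupp.single (V 0 b) 1 := by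
  by_cases h : 0 ≤ a
  · rw [HxF, if_pos h, map_sum]
    have hs : ∀ i : ℕ, shC (V 1 0) (Finsupp.single (V i b) (1:ℤ))
        = Finsupp.single (V ((i:ℤ)+1) b) 1 := by
      intro i; rw [shC_single]; congr 1; apply Z2_ext <;> simp [add_comm]
    simp only [hs]
    rw [← Finset.sum_sub_distrib, teleX, Int.toNat_of_nonneg h]
  · push_neg at h
    rw [HxF, if_neg (not_le.mpr h), map_neg, map_sum]
    have hs : ∀ i : ℕ, shC (V 1 0) (Finsupp.single (V (-1-i) b) (1:ℤ))
        = Finsupp.single (V (-(i:ℤ)) b) 1 := by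
      intro i; rw [shC_single]; congr 1; apply Z2_ext <;> simp <;> ring
    simp only [hs]
    have t := teleX' b (-a).toNat
    rw [Finset.sum_sub_distrib] at t
    have ha : (-(((-a).toNat : ℕ) : ℤ)) = a := by omega
    rw [ha] at t
    linear_combination (norm := abel) -t

lemma DY_HyF (b : ℤ) :
    shC (V 0 1) (HyF b) - HyF b
      = Finsupp.single (V 0 b) 1 - Finsupp.single (V 0 0) 1 := by
  by_cases h : 0 ≤ b
  · rw [HyF, if_pos h, map_sum]
    have hs : ∀ i : ℕ, shC (V 0 1) (Finsupp.single (V 0 i) (1:ℤ))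
        = Finsupp.single (V 0 ((i:ℤ)+1)) 1 := by
      intro i; rw [shC_single]; congr 1; apply Z2_ext <;> simp [add_comm]
    simp only [hs]
    have tele : ∑ i ∈ Finset.range b.toNat,
        (Finsupp.single (V 0 ((i:ℤ)+1)) (1:ℤ) - Finsupp.single (V 0 i) 1)
        = Finsupp.single (V 0 b.toNat) 1 - Finsupp.single (V 0 0) 1 := by
      induction b.toNat with
      | zero => simp
      | succ n ih => rw [Finset.sum_range_succ, ih]; push_cast; abel
    rw [← Finset.sum_sub_distrib, tele, Int.toNat_of_nonneg h]
  · push_neg at h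
    rw [HyF, if_neg (not_le.mpr h), map_neg, map_sum]
    have hs : ∀ i : ℕ, shC (V 0 1) (Finsupp.single (V 0 (-1-i)) (1:ℤ))
        = Finsupp.single (V 0 (-(i:ℤ))) 1 := by
      intro i; rw [shC_single]; congr 1; apply Z2_ext <;> simp <;> ring
    simp only [hs]
    have tele : ∑ i ∈ Finset.range (-b).toNat,
        (Finsupp.single (V 0 (-(i:ℤ))) (1:ℤ) - Finsupp.single (V 0 (-1-i)) 1)
        = Finsupp.single (V 0 0) 1 - Finsupp.single (V 0 (-((-b).toNat:ℤ))) 1 := by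
      induction (-b).toNat with
      | zero => simp
      | succ n ih =>
        rw [Finset.sum_range_succ, ih]
        have : (-1 - (n:ℤ)) = -((n:ℕ)+1:ℕ) := by push_cast; ring
        rw [this]
        abel
    rw [Finset.sum_sub_distrib] at tele
    have hb : (-(((-b).toNat : ℕ) : ℤ)) = b := by omega
    rw [hb] at tele
    linear_combination (norm := abel) -tele

lemma tele_m (m : Z2) :
    Finsupp.single m (1:ℤ) - Finsupp.single (0:Z2) 1
      = (shC (V 1 0) (HxF (m 0) (m 1)) - HxF (m 0) (m 1))
        + (shC (V 0 1) (HyF (m 1)) - HyF (m 1)) := by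
  rw [DX_HxF, DY_HyF, V_eta, V_zero]
  abel

lemma epsC_eq (P : C0Z2) : epsC P = ∑ m ∈ P.support, P m := by
  rw [epsC, Finsupp.liftAddHom_apply]
  rfl

lemma decompP (P : C0Z2) (h : epsC P = 0) :
    ∃ Q R : C0Z2, P = (shC (V 1 0) Q - Q) + (shC (V 0 1) R - R) := by
  refine ⟨∑ m ∈ P.support, P m • HxF (m 0) (m 1),
    ∑ m ∈ P.support, P m • HyF (m 1), ?_⟩
  rw [map_sum, map_sum, ← Finset.sum_sub_distrib, ← Finset.sum_sub_distrib,
    ← Finset.sum_add_distrib]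
  have step : ∀ m ∈ P.support,
      (shC (V 1 0) (P m • HxF (m 0) (m 1)) - P m • HxF (m 0) (m 1))
        + (shC (V 0 1) (P m • HyF (m 1)) - P m • HyF (m 1))
      = Finsupp.single m (P m) - P m • Finsupp.single (0:Z2) 1 := by
    intro m _
    rw [map_zsmul, map_zsmul, ← smul_sub, ← smul_sub, ← smul_add, ← tele_m,
      smul_sub, Finsupp.smul_single, smul_eq_mul, mul_one]
  rw [Finset.sum_congr rfl step, Finset.sum_sub_distrib, ← Finset.sum_smul,
    ← epsC_eq, h]
  simp [Finsupp.sum_single P]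
  conv_lhs => rw [← Finsupp.sum_single P]
  rfl

end Telescope
section Sweep

noncomputable def mu (a0 : ℤ) (γ : C1Z2) : ℕ :=
  ∑ p ∈ (extC 1 γ).support, (p 0 - a0).toNat

lemma col_case {γ : C1Z2} (h : bdZ γ = 0) (a0 : ℤ)
    (hcol : ∀ p ∈ (extC 1 γ).support, p 0 = a0) : γ = 0 := by
  have hrow := rowsum_zero h
  have h1 : extC 1 γ = 0 := by
    ext m
    rw [Finsupp.coe_zero, Pi.zero_apply]
    by_cases hm : m ∈ (extC 1 γ).support
    · have hval : (piY (extC 1 γ)) (m 1) = (extC 1 γ) m := by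
        rw [piY, Finsupp.mapDomain.addMonoidHom_apply, Finsupp.mapDomain,
          Finsupp.sum_apply, Finsupp.sum]
        rw [Finset.sum_eq_single m]
        · rw [Finsupp.single_apply, if_pos rfl]
        · intro p hp hne
          rw [Finsupp.single_apply]
          rw [if_neg]
          intro h11
          exact hne (Z2_ext ((hcol p hp).trans (hcol m hm).symm) h11)
        · intro hnm; exact absurd hm hnm
      rw [← hval, hrow]; rfl
    · exact Finsupp.notMem_support_iff.1 hm
  have h0 : extC 0 γ = 0 := by
    apply twoD_inv
    have hd := bd_decomp γ
    rw [h, h1] at hd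
    simp only [map_zero, sub_zero, add_zero] at hd
    linear_combination (norm := abel) -hd
  exact eq_zero_of_ext γ h0 h1

lemma toNat_key : ∀ x y z : ℤ, x = y - 1 → z < y → (x - z).toNat < (y - z).toNat := by
  intros x y z h1 h2; omega

lemma sweep : ∀ N : ℕ, ∀ a0 : ℤ, ∀ γ : C1Z2, bdZ γ = 0 →
    (∀ p ∈ (extC 1 γ).support, a0 ≤ p 0) → mu a0 γ = N →
    ∃ P : C0Z2, γ = starH z0 P := by
  intro N
  induction N using Nat.strong_induction_on with
  | _ N ih =>
  intro a0 γ h hlb hmu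
  by_cases hex : ∃ p ∈ (extC 1 γ).support, a0 < p 0
  · obtain ⟨p, hp, hpgt⟩ := hex
    have hc : (extC 1 γ) p ≠ 0 := Finsupp.mem_support_iff.1 hp
    set c : ℤ := (extC 1 γ) p with hcdef
    set w : Z2 := p - V 1 0 with hw
    have hwne : w ≠ p := by
      intro hcon
      have : p 0 - 1 = p 0 := by
        calc p 0 - 1 = w 0 := by rw [hw]; simp
        _ = p 0 := by rw [hcon]
      omega
    have hw0 : w 0 = p 0 - 1 := by rw [hw]; simp
    set γ' : C1Z2 := γ - c • shiftZ w z0 with hγ'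
    clear_value c w γ'
    have hbd' : bdZ γ' = 0 := by
      rw [hγ', map_sub, map_zsmul, bdZ_shC, bdZ_z0, map_zero, smul_zero, h, sub_zero]
    have hext' : extC 1 γ'
        = extC 1 γ - c • (Finsupp.single p 1 - Finsupp.single w 1) := by
      rw [hγ', map_sub, map_zsmul, extC_shiftZ, extC1_z0, map_sub, shC_single, shC_single]
      have e1 : w + V 1 0 = p := by rw [hw]; abel
      have e2 : w + V 0 0 = w := by rw [V_zero, add_zero]
      rw [e1, e2]
    have happ : ∀ q : Z2, (extC 1 γ') q
        = (extC 1 γ) q - c * ((if p = q then 1 else 0) - if w = q then 1 else 0) := by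
      intro q
      rw [hext']
      simp [Finsupp.single_apply, mul_sub]
    have hsupp' : (extC 1 γ').support ⊆ insert w (((extC 1 γ).support).erase p) := by
      intro q hq
      have hqne : (extC 1 γ') q ≠ 0 := Finsupp.mem_support_iff.1 hq
      by_cases hqw : q = w
      · subst hqw; exact Finset.mem_insert_self _ _
      · apply Finset.mem_insert_of_mem
        by_cases hqp : q = p
        · subst hqp
          exfalso
          apply hqne
          rw [happ, if_pos rfl, if_neg (fun hcon => hwne hcon), ← hcdef]
          ring
        · rw [Finset.mem_erase]
          refine ⟨hqp, Finsupp.mem_support_iff.2 ?_⟩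
          have := happ q
          rw [if_neg (fun hcon => hqp hcon.symm), if_neg (fun hcon => hqw hcon.symm)] at this
          simpa [this] using hqne
    have hlb' : ∀ q ∈ (extC 1 γ').support, a0 ≤ q 0 := by
      intro q hq
      rcases Finset.mem_insert.1 (hsupp' hq) with hqw | hqe
      · subst hqw; omega
      · exact hlb q (Finset.mem_of_mem_erase hqe)
    have hlt : mu a0 γ' < N := by
      have hle1 : mu a0 γ' ≤ ∑ q ∈ insert w (((extC 1 γ).support).erase p),
          (q 0 - a0).toNat :=
        Finset.sum_le_sum_of_subset hsupp'
      have hle2 : ∑ q ∈ insert w (((extC 1 γ).support).erase p), (q 0 - a0).toNat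
          ≤ (w 0 - a0).toNat + ∑ q ∈ ((extC 1 γ).support).erase p, (q 0 - a0).toNat := by
        by_cases hwin : w ∈ ((extC 1 γ).support).erase p
        · rw [Finset.insert_eq_self.2 hwin]; exact Nat.le_add_left _ _
        · rw [Finset.sum_insert hwin]
      have heq : (p 0 - a0).toNat + ∑ q ∈ ((extC 1 γ).support).erase p, (q 0 - a0).toNat
          = N := by
        rw [Finset.add_sum_erase _ (fun q => (q 0 - a0).toNat) hp]; exact hmu
      calc mu a0 γ' ≤ _ := hle1
        _ ≤ _ := hle2
        _ < (p 0 - a0).toNat + ∑ q ∈ ((extC 1 γ).support).erase p, (q 0 - a0).toNat :=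
            Nat.add_lt_add_right (toNat_key _ _ _ hw0 hpgt) _
        _ = N := heq
    obtain ⟨P', hP'⟩ := ih _ hlt a0 γ' hbd' hlb' rfl
    refine ⟨P' + Finsupp.single w c, ?_⟩
    rw [map_add, ← hP', starH_single, hγ']
    abel
  · push_neg at hex
    have hcol : ∀ p ∈ (extC 1 γ).support, p 0 = a0 := fun p hp =>
      le_antisymm (hex p hp) (hlb p hp)
    exact ⟨0, by rw [col_case h a0 hcol, map_zero]⟩

lemma cycle_eq_star {γ : C1Z2} (h : bdZ γ = 0) : ∃ P, γ = starH z0 P := by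
  set S := ((extC 1 γ).support.image fun p => p 0)
  set a0 := (insert 0 S).min' (Finset.insert_nonempty _ _) with ha0
  apply sweep (mu a0 γ) a0 γ h _ rfl
  intro p hp
  apply Finset.min'_le
  apply Finset.mem_insert_of_mem
  exact Finset.mem_image_of_mem _ hp

lemma coinv (r : Z1) (h : phi0 (r.1) = 0) :
    ∃ W U : Z1, r = (shiftM (V 1 0) W - W) + (shiftM (V 0 1) U - U) := by
  have hr : bdZ r.1 = 0 := r.2
  obtain ⟨P, hP⟩ := cycle_eq_star hr
  have heps : epsC P = 0 := by
    have h2 := phi0_starH bdZ_z0 P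
    rw [← hP, h, phi0_z0, mul_one] at h2
    exact h2.symm
  obtain ⟨Q, R, hQR⟩ := decompP P heps
  have hQm : starH z0 Q ∈ Z1 := bdZ_starH bdZ_z0 Q
  have hRm : starH z0 R ∈ Z1 := bdZ_starH bdZ_z0 R
  refine ⟨⟨starH z0 Q, hQm⟩, ⟨starH z0 R, hRm⟩, ?_⟩
  apply Subtype.ext
  push_cast
  simp only [shiftM_coe]
  rw [hP, hQR, map_add, map_sub, map_sub, starH_shC, starH_shC]

end Sweep
section IntRec

lemma int_rec_exists {M : Type} [AddCommGroup M] (c : M) (s : ℤ → M) :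
    ∃ f : ℤ → M, f 0 = c ∧ ∀ b : ℤ, f (b + 1) = f b + s b := by
  refine ⟨fun b => c + (∑ i ∈ Finset.range b.toNat, s i)
    - ∑ i ∈ Finset.range (-b).toNat, s (-1 - i), ?_, ?_⟩
  · simp
  · intro b
    dsimp only
    by_cases hb : 0 ≤ b
    · have h1 : (b+1).toNat = b.toNat + 1 := by omega
      have h2 : (-(b+1)).toNat = 0 := by omega
      have h3 : (-b).toNat = 0 := by omega
      rw [h1, h2, h3, Finset.sum_range_succ]
      have hcast : ((b.toNat : ℕ) : ℤ) = b := by omega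
      rw [hcast]
      abel
    · push_neg at hb
      have h1 : (b+1).toNat = 0 := by omega
      have h3 : b.toNat = 0 := by omega
      have h2 : (-b).toNat = (-(b+1)).toNat + 1 := by omega
      rw [h1, h3, h2, Finset.sum_range_succ]
      have hcast : (-1 - (((-(b+1)).toNat : ℕ) : ℤ)) = b := by omega
      rw [hcast]
      abel

end IntRec

section TS

lemma TS_zero (α : Z2 → Z1) : Tmap (Smap α) = 0 := by
  funext t
  obtain ⟨u, v, w⟩ := t
  show shiftM u (Smap α (v, w)) - Smap α (u + v, w)
      + Smap α (u, v + w) - Smap α (u, v) = 0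
  show shiftM u (shiftM v (α w) - α (v + w) + α v)
      - (shiftM (u + v) (α w) - α (u + v + w) + α (u + v))
      + (shiftM u (α (v + w)) - α (u + (v + w)) + α u)
      - (shiftM u (α v) - α (u + v) + α u) = 0
  simp only [map_add, map_sub, shiftM_shiftM, add_assoc]
  abel

end TS
section Kernel

lemma cocycle_coboundary (y : (Z2 × Z2) → Z1) (hy : Tmap y = 0)
    (hphi : phi0 (((y (V 1 0, V 0 1)) : C1Z2) - ((y (V 0 1, V 1 0)) : C1Z2)) = 0) :
    ∃ α : Z2 → Z1, Smap α = y := by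
  classical
  have coc : ∀ u v w : Z2,
      shiftM u (y (v, w)) - y (u + v, w) + y (u, v + w) - y (u, v) = 0 := by
    intro u v w
    have h := congrFun hy (u, v, w)
    exact h
  have y00 : ∀ w : Z2, y (0, w) = y (0, 0) := by
    intro w
    have h := coc 0 0 w
    simp only [shiftM_zero_apply, zero_add, add_zero] at h
    linear_combination (norm := abel) h
  have yu0 : ∀ u : Z2, y (u, 0) = shiftM u (y (0, 0)) := by
    intro u
    have h := coc u 0 0
    simp only [add_zero, zero_add] at h
    linear_combination (norm := abel) -h
  -- the class of the cocycle vanishes; get the primitive on generators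
  obtain ⟨W, U, hWU⟩ : ∃ W U : Z1,
      y (V 1 0, V 0 1) - y (V 0 1, V 1 0)
        = (shiftM (V 1 0) W - W) + (shiftM (V 0 1) U - U) := by
    apply coinv
    push_cast
    exact hphi
  set m : Z1 := -U with hm
  set m' : Z1 := W with hm'
  have hr : y (V 1 0, V 0 1) - y (V 0 1, V 1 0)
      = (shiftM (V 1 0) m' - m') - (shiftM (V 0 1) m - m) := by
    rw [hWU, hm, hm', map_neg]
    abel
  clear hWU
  -- vertical primitive β and horizontal primitive A
  obtain ⟨β, hβ0, hβstep⟩ :=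
    int_rec_exists (y (0, 0)) (fun b => shiftM (V 0 b) m' - y (V 0 b, V 0 1))
  obtain ⟨A, hA0, hAstep⟩ :=
    int_rec_exists (y (0, 0)) (fun a => shiftM (V a 0) m - y (V a 0, V 1 0))
  -- the key invariant ("curvature transport")
  have star_lem : ∀ b : ℤ,
      shiftM (V 1 0) (β b) - β b + m - shiftM (V 0 b) m
        = y (V 1 0, V 0 b) - y (V 0 b, V 1 0) := by
    have key : ∀ b : ℤ,
        shiftM (V 1 0) (β (b+1)) - β (b+1) + m - shiftM (V 0 (b+1)) m
            - y (V 1 0, V 0 (b+1)) + y (V 0 (b+1), V 1 0)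
          = shiftM (V 1 0) (β b) - β b + m - shiftM (V 0 b) m
            - y (V 1 0, V 0 b) + y (V 0 b, V 1 0) := by
      intro b
      have hA := coc (V 1 0) (V 0 b) (V 0 1)
      have hB := coc (V 0 b) (V 0 1) (V 1 0)
      have hC := coc (V 0 b) (V 1 0) (V 0 1)
      have hD := congrArg (shiftM (V 0 b)) hr
      rw [hβstep b]
      simp only [map_add, map_sub, shiftM_shiftM, V_add, add_zero, zero_add] at hA hB hC hD ⊢
      linear_combination (norm := abel) -hA - hB + hC - hD
    intro b
    induction b using Int.induction_on with
    | zero =>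
      rw [hβ0, V_zero, shiftM_zero_apply, yu0 (V 1 0), y00 (V 1 0)]
      abel
    | succ b ih =>
      have h := key b
      push_cast
      linear_combination (norm := abel) h + ih
    | pred b ih =>
      have h := key (-(b:ℤ) - 1)
      have e : (-(b:ℤ) - 1) + 1 = -(b:ℤ) := by ring
      rw [e] at h
      push_cast
      linear_combination (norm := abel) -h + ih
  -- define the primitive
  obtain ⟨α, hαV⟩ : ∃ α : Z2 → Z1, ∀ a b : ℤ,
      α (V a b) = A a + shiftM (V a 0) (β b) - y (V a 0, V 0 b) :=
    ⟨fun u => A (u 0) + shiftM (V (u 0) 0) (β (u 1)) - y (V (u 0) 0, V 0 (u 1)),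
      fun a b => by simp only [V_apply0, V_apply1]⟩
  have hα0 : α 0 = y (0, 0) := by
    rw [← V_zero, hαV]
    simp only [V_zero, shiftM_zero_apply, hA0, hβ0]
    abel
  have hαE1 : α (V 1 0) = m := by
    have h1 : A 1 = A 0 + (shiftM (V 0 0) m - y (V 0 0, V 1 0)) := hAstep 0
    rw [hαV, h1]
    simp only [V_zero, shiftM_zero_apply, hA0, hβ0, y00 (V 1 0)]
    rw [yu0 (V 1 0)]
    abel
  have hαE2 : α (V 0 1) = m' := by
    have h1 : β 1 = β 0 + (shiftM (V 0 0) m' - y (V 0 0, V 0 1)) := hβstep 0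
    rw [hαV, h1]
    simp only [V_zero, shiftM_zero_apply, hA0, hβ0, y00 (V 0 1)]
    abel
  -- the two recurrence properties of α
  have N2 : ∀ u : Z2, α (u + V 0 1) = shiftM u m' + α u - y (u, V 0 1) := by
    have N2' : ∀ a b : ℤ, α (V a (b + 1))
        = shiftM (V a b) m' + α (V a b) - y (V a b, V 0 1) := by
      intro a b
      rw [hαV, hαV, hβstep b]
      have hE := coc (V a 0) (V 0 b) (V 0 1)
      simp only [map_add, map_sub, shiftM_shiftM, V_add, add_zero, zero_add] at hE ⊢
      linear_combination (norm := abel) -hE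
    intro u
    have h := N2' (u 0) (u 1)
    rw [V_eta] at h
    have hu' : u + V 0 1 = V (u 0) (u 1 + 1) := by
      apply Z2_ext <;> simp
    rw [hu']
    exact h
  have N1 : ∀ u : Z2, α (u + V 1 0) = shiftM u m + α u - y (u, V 1 0) := by
    have N1' : ∀ a b : ℤ, α (V (a + 1) b)
        = shiftM (V a b) m + α (V a b) - y (V a b, V 1 0) := by
      intro a b
      rw [hαV, hαV, hAstep a]
      have hS := congrArg (shiftM (V a 0)) (star_lem b)
      have hF := coc (V a 0) (V 1 0) (V 0 b)
      have hG := coc (V a 0) (V 0 b) (V 1 0)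
      simp only [map_add, map_sub, shiftM_shiftM, V_add, add_zero, zero_add] at hS hF hG ⊢
      linear_combination (norm := abel) hS + hF - hG
    intro u
    have h := N1' (u 0) (u 1)
    rw [V_eta] at h
    have hu' : u + V 1 0 = V (u 0 + 1) (u 1) := by
      apply Z2_ext <;> simp
    rw [hu']
    exact h
  -- the defect function vanishes
  obtain ⟨Ef, hEfd⟩ : ∃ Ef : Z2 → Z2 → Z1, ∀ u v : Z2,
      Ef u v = shiftM u (α v) - α (u + v) + α u - y (u, v) :=
    ⟨fun u v => shiftM u (α v) - α (u + v) + α u - y (u, v), fun u v => rfl⟩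
  have hTE : ∀ u v w : Z2,
      shiftM u (Ef v w) - Ef (u + v) w + Ef u (v + w) - Ef u v = 0 := by
    intro u v w
    have hts := congrFun (TS_zero α) (u, v, w)
    have hcoc := coc u v w
    have hts' : shiftM u (shiftM v (α w) - α (v + w) + α v)
        - (shiftM (u + v) (α w) - α (u + v + w) + α (u + v))
        + (shiftM u (α (v + w)) - α (u + (v + w)) + α u)
        - (shiftM u (α v) - α (u + v) + α u) = 0 := by
      have hts0 : Tmap (Smap α) (u, v, w) = 0 := by simpa using hts
      exact hts0
    rw [hEfd, hEfd, hEfd, hEfd]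
    simp only [map_add, map_sub, shiftM_shiftM, add_assoc] at hts' ⊢
    linear_combination (norm := abel) hts' - hcoc
  have hE0 : ∀ u : Z2, Ef u 0 = 0 := by
    intro u
    rw [hEfd, hα0, add_zero, yu0 u]
    abel
  have hE1 : ∀ u : Z2, Ef u (V 1 0) = 0 := by
    intro u
    rw [hEfd, hαE1, N1 u]
    abel
  have hE2 : ∀ u : Z2, Ef u (V 0 1) = 0 := by
    intro u
    rw [hEfd, hαE2, N2 u]
    abel
  have hsh1 : ∀ u v : Z2, Ef u (v + V 1 0) = Ef u v := by
    intro u v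
    have h := hTE u v (V 1 0)
    rw [hE1 v, hE1 (u + v), map_zero] at h
    linear_combination (norm := abel) h
  have hsh2 : ∀ u v : Z2, Ef u (v + V 0 1) = Ef u v := by
    intro u v
    have h := hTE u v (V 0 1)
    rw [hE2 v, hE2 (u + v), map_zero] at h
    linear_combination (norm := abel) h
  have hrow : ∀ u : Z2, ∀ a : ℤ, Ef u (V a 0) = 0 := by
    intro u a
    induction a using Int.induction_on with
    | zero => rw [V_zero]; exact hE0 u
    | succ a ih =>
      have h := hsh1 u (V a 0)
      have e : V (a:ℤ) 0 + V 1 0 = V ((a:ℤ)+1) 0 := by simp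
      rw [e] at h
      push_cast
      rw [h]; exact ih
    | pred a ih =>
      have h := hsh1 u (V (-(a:ℤ)-1) 0)
      have e : V (-(a:ℤ)-1) 0 + V 1 0 = V (-(a:ℤ)) 0 := by
        rw [V_add]; congr 1; ring
      rw [e] at h
      push_cast
      rw [← h]; exact ih
  have hall : ∀ u : Z2, ∀ a b : ℤ, Ef u (V a b) = 0 := by
    intro u a b
    induction b using Int.induction_on with
    | zero => exact hrow u a
    | succ b ih =>
      have h := hsh2 u (V a b)
      have e : V a (b:ℤ) + V 0 1 = V a ((b:ℤ)+1) := by simp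
      rw [e] at h
      push_cast
      rw [h]; exact ih
    | pred b ih =>
      have h := hsh2 u (V a (-(b:ℤ)-1))
      have e : V a (-(b:ℤ)-1) + V 0 1 = V a (-(b:ℤ)) := by
        rw [V_add]; congr 1 <;> ring
      rw [e] at h
      push_cast
      rw [← h]; exact ih
  refine ⟨α, ?_⟩
  funext t
  obtain ⟨u, v⟩ := t
  have h := hall u (v 0) (v 1)
  rw [V_eta, hEfd] at h
  have hgoal : Smap α (u, v) = shiftM u (α v) - α (u + v) + α u := rfl
  rw [hgoal]
  linear_combination (norm := abel) h

end Kernel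
section Generator

/-- horizontal path chain from `0` to `(a,0)` -/
noncomputable def cH (a : ℤ) : C1Z2 :=
  if 0 ≤ a then ∑ i ∈ Finset.range a.toNat, Finsupp.single ((V i 0, (0 : Fin 2))) 1
  else -∑ i ∈ Finset.range (-a).toNat, Finsupp.single ((V (-1-i) 0, (0 : Fin 2))) 1

/-- vertical path chain from `0` to `(0,b)` -/
noncomputable def cV (b : ℤ) : C1Z2 :=
  if 0 ≤ b then ∑ i ∈ Finset.range b.toNat, Finsupp.single ((V 0 i, (1 : Fin 2))) 1
  else -∑ i ∈ Finset.range (-b).toNat, Finsupp.single ((V 0 (-1-i), (1 : Fin 2))) 1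

lemma bdZ_single_h (w : Z2) : bdZ (Finsupp.single ((w, (0:Fin 2))) (1:ℤ))
    = Finsupp.single (w + V 1 0) 1 - Finsupp.single w 1 := by
  rw [bdZ_single, one_smul, E1_eq]

lemma bdZ_single_v (w : Z2) : bdZ (Finsupp.single ((w, (1:Fin 2))) (1:ℤ))
    = Finsupp.single (w + V 0 1) 1 - Finsupp.single w 1 := by
  rw [bdZ_single, one_smul, E2_eq]

lemma bdZ_cH (a : ℤ) :
    bdZ (cH a) = Finsupp.single (V a 0) 1 - Finsupp.single (V 0 0) 1 := by
  by_cases h : 0 ≤ a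
  · rw [cH, if_pos h, map_sum]
    have hs : ∀ i : ℕ, bdZ (Finsupp.single ((V i 0, (0:Fin 2))) (1:ℤ))
        = Finsupp.single (V ((i:ℤ)+1) 0) 1 - Finsupp.single (V i 0) 1 := by
      intro i
      rw [bdZ_single_h]
      congr 2
      simp
    simp only [hs]
    rw [teleX, Int.toNat_of_nonneg h]
  · push_neg at h
    rw [cH, if_neg (not_le.mpr h), map_neg, map_sum]
    have hs : ∀ i : ℕ, bdZ (Finsupp.single ((V (-1-i) 0, (0:Fin 2))) (1:ℤ))
        = Finsupp.single (V (-(i:ℤ)) 0) 1 - Finsupp.single (V (-1-i) 0) 1 := by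
      intro i
      rw [bdZ_single_h]
      congr 2
      apply Z2_ext <;> simp <;> ring
    simp only [hs]
    have t := teleX' 0 (-a).toNat
    rw [Finset.sum_sub_distrib] at t
    have ha : (-(((-a).toNat : ℕ) : ℤ)) = a := by omega
    rw [ha] at t
    rw [Finset.sum_sub_distrib]
    linear_combination (norm := abel) -t

lemma bdZ_cV (b : ℤ) :
    bdZ (cV b) = Finsupp.single (V 0 b) 1 - Finsupp.single (V 0 0) 1 := by
  by_cases h : 0 ≤ b
  · rw [cV, if_pos h, map_sum]
    have hs : ∀ i : ℕ, bdZ (Finsupp.single ((V 0 i, (1:Fin 2))) (1:ℤ))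
        = Finsupp.single (V 0 ((i:ℤ)+1)) 1 - Finsupp.single (V 0 i) 1 := by
      intro i
      rw [bdZ_single_v]
      congr 2
      simp
    simp only [hs]
    have tele : ∀ n : ℕ, ∑ i ∈ Finset.range n,
        (Finsupp.single (V 0 ((i:ℤ)+1)) (1:ℤ) - Finsupp.single (V 0 i) 1)
        = Finsupp.single (V 0 (n:ℤ)) 1 - Finsupp.single (V 0 0) 1 := by
      intro n
      induction n with
      | zero => simp
      | succ k ih => rw [Finset.sum_range_succ, ih]; push_cast; abel
    rw [tele, Int.toNat_of_nonneg h]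
  · push_neg at h
    rw [cV, if_neg (not_le.mpr h), map_neg, map_sum]
    have hs : ∀ i : ℕ, bdZ (Finsupp.single ((V 0 (-1-i), (1:Fin 2))) (1:ℤ))
        = Finsupp.single (V 0 (-(i:ℤ))) 1 - Finsupp.single (V 0 (-1-i)) 1 := by
      intro i
      rw [bdZ_single_v]
      congr 2
      apply Z2_ext <;> simp <;> ring
    simp only [hs]
    have tele : ∀ n : ℕ, ∑ i ∈ Finset.range n,
        (Finsupp.single (V 0 (-(i:ℤ))) (1:ℤ) - Finsupp.single (V 0 (-1-i)) 1)
        = Finsupp.single (V 0 0) 1 - Finsupp.single (V 0 (-(n:ℤ))) 1 := by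
      intro n
      induction n with
      | zero => simp
      | succ k ih =>
        rw [Finset.sum_range_succ, ih]
        have : (-1 - (k:ℤ)) = -((k:ℕ)+1:ℕ) := by push_cast; ring
        rw [this]
        abel
    have t := tele (-b).toNat
    rw [Finset.sum_sub_distrib] at t
    have hb : (-(((-b).toNat : ℕ) : ℤ)) = b := by omega
    rw [hb] at t
    rw [Finset.sum_sub_distrib]
    linear_combination (norm := abel) -t

/-- standard staircase path chain from `0` to `u` -/
noncomputable def cpath (u : Z2) : C1Z2 := cH (u 0) + shiftZ (V (u 0) 0) (cV (u 1))

lemma bdZ_cpath (u : Z2) :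
    bdZ (cpath u) = Finsupp.single u 1 - Finsupp.single (0 : Z2) 1 := by
  rw [cpath, map_add, bdZ_cH, bdZ_shC, bdZ_cV, map_sub, shC_single, shC_single]
  have e1 : V (u 0) 0 + V 0 (u 1) = u := by rw [V_add, add_zero, zero_add, V_eta]
  have e2 : V (u 0) 0 + V 0 0 = V (u 0) 0 := by rw [V_zero, add_zero]
  rw [e1, e2, ← V_zero]
  abel

/-- the generating cocycle, values in `C1Z2` -/
noncomputable def y1val (u v : Z2) : C1Z2 :=
  shiftZ u (cpath v) - cpath (u + v) + cpath u

lemma y1val_mem (u v : Z2) : y1val u v ∈ Z1 := by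
  show bdZ (y1val u v) = 0
  simp only [y1val, map_sub, map_add, bdZ_shC, bdZ_cpath, shC_single, add_zero]
  abel

/-- the generating cocycle -/
noncomputable def Y1 : (Z2 × Z2) → Z1 := fun t => ⟨y1val t.1 t.2, y1val_mem t.1 t.2⟩

lemma TY1 : Tmap Y1 = 0 := by
  funext t
  obtain ⟨u, v, w⟩ := t
  apply Subtype.ext
  have hzero : ((0 : (Z2 × Z2 × Z2) → Z1) (u, v, w) : C1Z2) = 0 := rfl
  rw [hzero]
  have hval : ((Tmap Y1 (u, v, w) : Z1) : C1Z2)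
      = shiftZ u (y1val v w) - y1val (u + v) w + y1val u (v + w) - y1val u v := rfl
  rw [hval]
  simp only [y1val, map_sub, map_add, shiftZ_shiftZ, add_assoc]
  abel

lemma cH_one : cH 1 = Finsupp.single ((V 0 0, (0 : Fin 2))) 1 := by
  rw [cH, if_pos (by norm_num : (0:ℤ) ≤ 1)]
  norm_num

lemma cV_one : cV 1 = Finsupp.single ((V 0 0, (1 : Fin 2))) 1 := by
  rw [cV, if_pos (by norm_num : (0:ℤ) ≤ 1)]
  norm_num

lemma cH_zero : cH 0 = 0 := by rw [cH, if_pos le_rfl]; simp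

lemma cV_zero : cV 0 = 0 := by rw [cV, if_pos le_rfl]; simp

lemma cpath_E1 : cpath (V 1 0) = Finsupp.single ((V 0 0, (0 : Fin 2))) 1 := by
  rw [cpath]
  simp only [V_apply0, V_apply1]
  rw [cH_one, cV_zero, map_zero, add_zero]

lemma cpath_E2 : cpath (V 0 1) = Finsupp.single ((V 0 0, (1 : Fin 2))) 1 := by
  rw [cpath]
  simp only [V_apply0, V_apply1]
  rw [cH_zero, cV_one, V_zero, shiftZ_zero_apply, zero_add]

lemma cpath_E11 : cpath (V 1 1)
    = Finsupp.single ((V 0 0, (0 : Fin 2))) 1 + Finsupp.single ((V 1 0, (1 : Fin 2))) 1 := by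
  rw [cpath]
  simp only [V_apply0, V_apply1]
  rw [cH_one, cV_one, shiftZ_single]
  have e : V 1 0 + V 0 0 = V 1 0 := by simp
  rw [e]

lemma phi0_Y1 : phi0 ((Y1 (V 1 0, V 0 1) : C1Z2) - (Y1 (V 0 1, V 1 0) : C1Z2)) = 1 := by
  have hv : ((Y1 (V 1 0, V 0 1) : Z1) : C1Z2) = y1val (V 1 0) (V 0 1) := rfl
  have hv' : ((Y1 (V 0 1, V 1 0) : Z1) : C1Z2) = y1val (V 0 1) (V 1 0) := rfl
  rw [hv, hv']
  have e1 : V 1 0 + V 0 1 = V 1 1 := by simp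
  have e2 : V 0 1 + V 1 0 = V 1 1 := by simp
  rw [y1val, y1val, e1, e2, cpath_E1, cpath_E2, cpath_E11, shiftZ_single, shiftZ_single]
  have e3 : V 1 0 + V 0 0 = V 1 0 := by simp
  have e4 : V 0 1 + V 0 0 = V 0 1 := by simp
  rw [e3, e4]
  simp only [map_add, map_sub, phi0_single]
  norm_num

end Generator
section Assembly

/-- The winding-number functional on 2-cocycles. -/
noncomputable def PhiHat : Tmap.ker →+ ℤ where
  toFun y := phi0 (((y : (Z2 × Z2) → Z1) (V 1 0, V 0 1) : C1Z2)
    - ((y : (Z2 × Z2) → Z1) (V 0 1, V 1 0) : C1Z2))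
  map_zero' := by simp
  map_add' a b := by
    have h1 : ((a + b : Tmap.ker) : (Z2 × Z2) → Z1) (V 1 0, V 0 1)
        = (a : (Z2 × Z2) → Z1) (V 1 0, V 0 1) + (b : (Z2 × Z2) → Z1) (V 1 0, V 0 1) := rfl
    have h2 : ((a + b : Tmap.ker) : (Z2 × Z2) → Z1) (V 0 1, V 1 0)
        = (a : (Z2 × Z2) → Z1) (V 0 1, V 1 0) + (b : (Z2 × Z2) → Z1) (V 0 1, V 1 0) := rfl
    show phi0 _ = phi0 _ + phi0 _
    rw [h1, h2]
    push_cast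
    rw [show ∀ p q r s : C1Z2, p + q - (r + s) = (p - r) + (q - s) by intros; abel,
      map_add]

lemma PhiHat_surjective : Function.Surjective PhiHat := by
  intro n
  refine ⟨n • ⟨Y1, TY1⟩, ?_⟩
  rw [map_zsmul]
  have h1 : PhiHat ⟨Y1, TY1⟩ = 1 := phi0_Y1
  rw [h1, smul_eq_mul, mul_one]

lemma subgroup_eq : Smap.range.addSubgroupOf Tmap.ker = PhiHat.ker := by
  ext x
  rw [AddSubgroup.mem_addSubgroupOf, AddMonoidHom.mem_ker, AddMonoidHom.mem_range]
  constructor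
  · rintro ⟨α, hα⟩
    show phi0 _ = 0
    have hv1 : ((x : (Z2 × Z2) → Z1) (V 1 0, V 0 1) : C1Z2)
        = shiftZ (V 1 0) (α (V 0 1) : C1Z2) - (α (V 1 0 + V 0 1) : C1Z2) + (α (V 1 0) : C1Z2) := by
      rw [← hα]; rfl
    have hv2 : ((x : (Z2 × Z2) → Z1) (V 0 1, V 1 0) : C1Z2)
        = shiftZ (V 0 1) (α (V 1 0) : C1Z2) - (α (V 0 1 + V 1 0) : C1Z2) + (α (V 0 1) : C1Z2) := by
      rw [← hα]; rfl
    rw [hv1, hv2]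
    have hcomm : V 0 1 + V 1 0 = V 1 0 + V 0 1 := by rw [add_comm]
    rw [hcomm]
    simp only [map_sub, map_add]
    rw [phi0_shiftZ_cycle (V 1 0) (α (V 0 1)).2, phi0_shiftZ_cycle (V 0 1) (α (V 1 0)).2]
    ring
  · intro hx
    have hco := cocycle_coboundary (x : (Z2 × Z2) → Z1) x.2 hx
    obtain ⟨α, hα⟩ := hco
    exact ⟨α, hα⟩

end Assembly



/-- The second group cohomology `H²(ℤ², Z_1(ℤ²))` — 2-cocycles modulo 2-coboundaries,
for the translation action of `ℤ²` on the cycle group `Z_1(ℤ²) = H_1(E²)` — is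
isomorphic to `ℤ`. -/
theorem h2_iso_int :
    Nonempty ((Tmap.ker ⧸ Smap.range.addSubgroupOf Tmap.ker) ≃+ ℤ) := by
  rw [subgroup_eq]
  exact ⟨QuotientAddGroup.quotientKerEquivOfSurjective PhiHat PhiHat_surjective⟩
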